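/- SDec-POMDP and Dec-POMDP-Com model-policy-objective structures are equivalent: for every joint history h̄ and initial belief b⁰, the value of the Dec-POMDP-Com policy structure equals the value of the corresponding SDec-POMDP policy structure, V_{XY Dec-POMDP-Com}(h̄, b⁰) = V_{XY SDec-POMDP}(h̄, b⁰), as obtained by composing the value-preserving reduction between the Dec-POMDP-Com and the Dec-POMDP with the value equality V_{XY Dec-POMDP}(h̄, b⁰) = V_{XY SDec-POMDP}(h̄, b⁰) between the Dec-POMDP and the SDec-POMDP. -/

import Mathlib

/-!
Statement 14: SDec-POMDP and Dec-POMDP-Com model-policy-objective structures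
are equivalent: the value of a Dec-POMDP-Com policy structure equals the value
of the corresponding SDec-POMDP policy structure, obtained by composing the
value-preserving reduction between the Dec-POMDP-Com and the Dec-POMDP with
the value equality between the Dec-POMDP and the SDec-POMDP.
-/

open scoped NNReal

/-- A decentralized POMDP. -/
structure DecPOMDP (I S : Type) (A O : I → Type) where
  T : S → (∀ i, A i) → PMF S
  Obs : S → (∀ i, A i) → PMF (∀ i, O i)
  R : S → (∀ i, A i) → ℝ

/-- A Dec-POMDP-Com: a Dec-POMDP extended with an alphabet `Msg` of messages
and a communication cost function. -/
structure DecPOMDPCom (I S : Type) (A O : I → Type) (Msg : Type) extends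
    DecPOMDP I S A O where
  cost : (I → Msg) → ℝ

/-- Blackboard memory `M_c = (∏ i, ({∅} ∪ A_i O_i))*`. -/
abbrev McT (I : Type) (A O : I → Type) := List (∀ i, Option (A i × O i))

/-- Local action–observation string `(A_i O_i)*` of agent `i`. -/
abbrev LocT (I : Type) (A O : I → Type) (i : I) := List (A i × O i)

/-- Local history of agent `i` in the Dec-POMDP obtained from a Dec-POMDP-Com:
actions are control–message pairs, observations carry broadcast messages. -/
abbrev ComHist (I : Type) (A O : I → Type) (Msg : Type) (i : I) :=
  List ((A i × Msg) × (O i × (I → Msg)))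

section

variable {I S : Type} {A O : I → Type}
variable [Fintype I] [DecidableEq I] [Fintype S]
  [∀ i, Fintype (A i)] [∀ i, Fintype (O i)]

/-- The decentralized value recursion (horizon-indexed). -/
noncomputable def decValue (M : DecPOMDP I S A O) (γ : ℝ)
    (π : ∀ i, LocT I A O i → A i) : ℕ → S → (∀ i, LocT I A O i) → ℝ
  | 0, _, _ => 0
  | n + 1, s, h =>
      M.R s (fun i => π i (h i)) +
        γ * ∑ s' : S, ∑ o' : (∀ i, O i),
          (M.T s (fun i => π i (h i)) s').toReal *
            (M.Obs s' (fun i => π i (h i)) o').toReal *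
              decValue M γ π n s' (fun i => h i ++ [(π i (h i), o' i)])

/-- The semi-decentralized value recursion (horizon-indexed). -/
noncomputable def sdecValue (M : DecPOMDP I S A O) (γ : ℝ)
    (F : S → (∀ i, A i) → PMF (I → ℝ≥0))
    (ψ : McT I A O → (∀ i, LocT I A O i) → PMF (∀ i, A i))
    (ηc : McT I A O → (∀ i, A i) → (∀ i, O i) → PMF (McT I A O))
    (ηa : ∀ i, LocT I A O i → (∀ i, A i) → (∀ i, O i) → PMF (LocT I A O i)) :
    ℕ → McT I A O → (∀ i, LocT I A O i) → S → ℝ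
  | 0, _, _, _ => 0
  | n + 1, mc, m, s =>
      ∑ a : (∀ i, A i), (ψ mc m a).toReal *
        (M.R s a +
          γ * ∑' τ : (I → ℝ≥0), (F s a τ).toReal *
            ∑ s' : S, ∑ o' : (∀ i, O i),
              (M.T s a s').toReal * (M.Obs s' a o').toReal *
                ∑' mc' : McT I A O, (ηc mc a o' mc').toReal *
                  ∑' m' : (∀ i, LocT I A O i),
                    (∏ i, (ηa i (m i) a o' (m' i)).toReal) *
                      sdecValue M γ F ψ ηc ηa n mc' m' s')

variable {Msg : Type} [Fintype Msg]

/-- The value recursion of a Dec-POMDP-Com under a pair of control and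
communication policies: rewards are control rewards minus communication
costs, and under instantaneous noise-free broadcast every agent additionally
observes the messages of all agents (horizon-indexed). -/
noncomputable def comValue (C : DecPOMDPCom I S A O Msg) (γ : ℝ)
    (πa : ∀ i, ComHist I A O Msg i → A i)
    (πσ : ∀ i, ComHist I A O Msg i → Msg) :
    ℕ → S → (∀ i, ComHist I A O Msg i) → ℝ
  | 0, _, _ => 0
  | n + 1, s, h =>
      (C.R s (fun i => πa i (h i)) - C.cost fun i => πσ i (h i)) +
        γ * ∑ s' : S, ∑ o' : (∀ i, O i),
          (C.T s (fun i => πa i (h i)) s').toReal *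
            (C.Obs s' (fun i => πa i (h i)) o').toReal *
              comValue C γ πa πσ n s'
                (fun i => h i ++
                  [((πa i (h i), πσ i (h i)), (o' i, fun j => πσ j (h j)))])

/-- Pushforward of a PMF through a map: finite sum identity. -/
lemma sum_pmf_map_mul {α β : Type} [Fintype α] [Fintype β] [DecidableEq β]
    (p : PMF α) (f : α → β) (g : β → ℝ) :
    ∑ b : β, ((p.map f) b).toReal * g b = ∑ a : α, (p a).toReal * g (f a) := by
  have h1 : ∀ b : β, ((p.map f) b).toReal
      = ∑ a : α, if b = f a then (p a).toReal else 0 := by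
    intro b
    rw [PMF.map_apply, tsum_fintype, ENNReal.toReal_sum]
    · exact Finset.sum_congr rfl fun a _ => by split <;> simp
    · intro a _; split
      · exact PMF.apply_ne_top p a
      · simp
  simp only [h1, Finset.sum_mul]
  rw [Finset.sum_comm]
  refine Finset.sum_congr rfl fun a _ => ?_
  simp [Finset.sum_ite_eq']

/-- Value equality between the Dec-POMDP and the SDec-POMDP under the
degenerate blackboard structure. -/
lemma dec_eq_sdec (M : DecPOMDP I S A O) (γ : ℝ)
    (π : ∀ i, LocT I A O i → A i)
    (F : S → (∀ i, A i) → PMF (I → ℝ≥0))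
    (ψ : McT I A O → (∀ i, LocT I A O i) → PMF (∀ i, A i))
    (ηc : McT I A O → (∀ i, A i) → (∀ i, O i) → PMF (McT I A O))
    (ηa : ∀ i, LocT I A O i → (∀ i, A i) → (∀ i, O i) → PMF (LocT I A O i))
    (hψ : ∀ mc m, ψ mc m = PMF.pure fun i => π i (m i))
    (hηc : ∀ mc a o, ηc mc a o = PMF.pure mc)
    (hηa : ∀ i mi a o, ηa i mi a o = PMF.pure (mi ++ [(a i, o i)])) :
    ∀ (n : ℕ) (mc : McT I A O) (m : ∀ i, LocT I A O i) (s : S),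
      decValue M γ π n s m = sdecValue M γ F ψ ηc ηa n mc m s := by
  intro n
  induction n with
  | zero => intro mc m s; rfl
  | succ n ih =>
    intro mc m s
    rw [decValue, sdecValue]
    set c : ∀ i, A i := fun i => π i (m i) with hc
    have hsum : ∀ X : (∀ i, A i) → ℝ,
        (∑ a : (∀ i, A i), ((ψ mc m) a).toReal * X a) = X c := by
      intro X
      rw [hψ, ← hc]
      rw [Finset.sum_eq_single c]
      · simp
      · intro a _ ha; simp [PMF.pure_apply, ha]
      · simp
    rw [hsum]
    congr 1
    have hτ : (∑' τ : (I → ℝ≥0), ((F s c) τ).toReal) = 1 := by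
      rw [← ENNReal.tsum_toReal_eq (fun τ => PMF.apply_ne_top _ _)]
      simp [PMF.tsum_coe]
    have hτ2 : ∀ Y : ℝ,
        (∑' τ : (I → ℝ≥0), ((F s c) τ).toReal * Y) = Y := by
      intro Y; rw [tsum_mul_right, hτ, one_mul]
    rw [hτ2]
    congr 1
    refine Finset.sum_congr rfl fun s' _ => Finset.sum_congr rfl fun o' _ => ?_
    congr 1
    have hmc : (∑' mc' : McT I A O, ((ηc mc c o') mc').toReal *
        ∑' m' : (∀ i, LocT I A O i),
          (∏ i, ((ηa i (m i) c o') (m' i)).toReal) *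
            sdecValue M γ F ψ ηc ηa n mc' m' s')
        = ∑' m' : (∀ i, LocT I A O i),
          (∏ i, ((ηa i (m i) c o') (m' i)).toReal) *
            sdecValue M γ F ψ ηc ηa n mc m' s' := by
      rw [tsum_eq_single mc]
      · rw [hηc]; simp
      · intro mc' hmc'; rw [hηc]; simp [PMF.pure_apply, hmc']
    rw [hmc]
    set m2 : ∀ i, LocT I A O i := fun i => m i ++ [(c i, o' i)] with hm2
    have hm' : (∑' m' : (∀ i, LocT I A O i),
        (∏ i, ((ηa i (m i) c o') (m' i)).toReal) *
          sdecValue M γ F ψ ηc ηa n mc m' s')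
        = sdecValue M γ F ψ ηc ηa n mc m2 s' := by
      rw [tsum_eq_single m2]
      · have : (∏ i, ((ηa i (m i) c o') (m2 i)).toReal) = 1 := by
          simp [hηa, hm2]
        rw [this, one_mul]
      · intro m' hm'
        have : ∃ i, m' i ≠ m2 i := by
          by_contra hno
          push_neg at hno
          exact hm' (funext hno)
        obtain ⟨i, hi⟩ := this
        simp only [hm2] at hi
        have : ((ηa i (m i) c o') (m' i)).toReal = 0 := by
          rw [hηa, PMF.pure_apply]
          split
          · exact absurd (by assumption) hi
          · simp
        rw [Finset.prod_eq_zero (Finset.mem_univ i) this, zero_mul]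
    rw [hm', ← ih mc m2 s']

/-- For every joint history `h̄` and initial belief `b⁰`,
the value of the Dec-POMDP-Com policy structure equals the value of the
corresponding SDec-POMDP policy structure, obtained by composing the
value-preserving reduction between the Dec-POMDP-Com and the (product-action)
Dec-POMDP with the value equality between the Dec-POMDP and the SDec-POMDP. -/
theorem sdecpomdp_decpomdpcom_value_equivalence
    (C : DecPOMDPCom I S A O Msg) (γ : ℝ)
    (πa : ∀ i, ComHist I A O Msg i → A i)
    (πσ : ∀ i, ComHist I A O Msg i → Msg) :
    ∃ M : DecPOMDP I S (fun i => A i × Msg) (fun i => O i × (I → Msg)),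
      -- the value-preserving reduction Dec-POMDP-Com ≤ Dec-POMDP
      (∀ s a, M.T s a = C.T s fun i => (a i).1) ∧
      (∀ s' a, M.Obs s' a =
        (C.Obs s' fun i => (a i).1).map fun o i => (o i, fun j => (a j).2)) ∧
      (∀ s a, M.R s a = C.R s (fun i => (a i).1) - C.cost fun i => (a i).2) ∧
      -- composed with the value equality Dec-POMDP = SDec-POMDP
      (∀ (F : S → (∀ i, (fun i => A i × Msg) i) → PMF (I → ℝ≥0))
          (ψ : McT I (fun i => A i × Msg) (fun i => O i × (I → Msg)) →
            (∀ i, LocT I (fun i => A i × Msg) (fun i => O i × (I → Msg)) i) →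
              PMF (∀ i, A i × Msg))
          (ηc : McT I (fun i => A i × Msg) (fun i => O i × (I → Msg)) →
            (∀ i, A i × Msg) → (∀ i, O i × (I → Msg)) →
              PMF (McT I (fun i => A i × Msg) (fun i => O i × (I → Msg))))
          (ηa : ∀ i, LocT I (fun i => A i × Msg) (fun i => O i × (I → Msg)) i →
            (∀ i, A i × Msg) → (∀ i, O i × (I → Msg)) →
              PMF (LocT I (fun i => A i × Msg) (fun i => O i × (I → Msg)) i)),
        (∀ mc m, ψ mc m =
          PMF.pure fun i => (πa i (m i), πσ i (m i))) →
        (∀ mc a o, ηc mc a o = PMF.pure mc) →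
        (∀ i mi a o, ηa i mi a o = PMF.pure (mi ++ [(a i, o i)])) →
        ∀ (n : ℕ) (h : ∀ i, ComHist I A O Msg i) (b0 : S → ℝ),
          (∀ s : S, comValue C γ πa πσ n s h =
            decValue M γ (fun i m => (πa i m, πσ i m)) n s h) ∧
          (∀ s : S, decValue M γ (fun i m => (πa i m, πσ i m)) n s h =
            sdecValue M γ F ψ ηc ηa n [] h s) ∧
          ∑ s : S, b0 s * comValue C γ πa πσ n s h =
            ∑ s : S, b0 s * sdecValue M γ F ψ ηc ηa n [] h s) := by
  classical
  refine ⟨{ T := fun s a => C.T s fun i => (a i).1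
            Obs := fun s' a =>
              (C.Obs s' fun i => (a i).1).map fun o i => (o i, fun j => (a j).2)
            R := fun s a =>
              C.R s (fun i => (a i).1) - C.cost fun i => (a i).2 },
    fun s a => rfl, fun s' a => rfl, fun s a => rfl, ?_⟩
  set M : DecPOMDP I S (fun i => A i × Msg) (fun i => O i × (I → Msg)) :=
    { T := fun s a => C.T s fun i => (a i).1
      Obs := fun s' a =>
        (C.Obs s' fun i => (a i).1).map fun o i => (o i, fun j => (a j).2)
      R := fun s a => C.R s (fun i => (a i).1) - C.cost fun i => (a i).2 }
  intro F ψ ηc ηa hψ hηc hηa n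
  have hcd : ∀ (n : ℕ) (s : S) (h : ∀ i, ComHist I A O Msg i),
      comValue C γ πa πσ n s h =
        decValue M γ (fun i m => (πa i m, πσ i m)) n s h := by
    intro n
    induction n with
    | zero => intro s h; rfl
    | succ n ih =>
      intro s h
      rw [comValue, decValue]
      congr 1
      congr 1
      refine Finset.sum_congr rfl fun s' _ => ?_
      simp only [mul_assoc]
      rw [← Finset.mul_sum, ← Finset.mul_sum]
      congr 1
      have := sum_pmf_map_mul
        (C.Obs s' fun i => πa i (h i))
        (fun (o : ∀ i, O i) (i : I) => (o i, fun j => πσ j (h j)))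
        (fun o' => decValue M γ (fun i m => (πa i m, πσ i m)) n s'
          (fun i => h i ++ [((πa i (h i), πσ i (h i)), o' i)]))
      rw [this]
      exact Finset.sum_congr rfl fun o _ => by rw [ih]
  have hds := dec_eq_sdec M γ (fun i m => (πa i m, πσ i m)) F ψ ηc ηa hψ hηc hηa
  intro h b0
  refine ⟨fun s => hcd n s h, fun s => hds n [] h s, ?_⟩
  refine Finset.sum_congr rfl fun s _ => ?_
  rw [hcd n s h, hds n [] h s]
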